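/- arXiv:1605.08191 — 3 statements merged into one kernel-verified Lean document; each statement's English description precedes it below -/
import Mathlib

section
/- Fix w ∈ ℝ and V_c > 0, and suppose ρ_c, ρ* ∈ [R_f',∞) satisfy ρ_c ≤ ρ*, p(ρ_c) = w − V_c and p(ρ*) = w. Let Q_0 satisfy 0 < Q_0 ≤ ρ_c·V_c. Then there exists a unique ρ̂ ∈ [ρ_c, ρ*] such that ρ̂·(w − p(ρ̂)) = Q_0 and ρ·(w − p(ρ)) < Q_0 for all ρ ∈ (ρ̂, ρ*]. (This is the congested state û on the 1-Lax curve through w with prescribed flow Q_0 used in the definition of the constrained Riemann solvers.) -/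
/-- There exists a unique ρ̂ ∈ [ρ_c, ρ*] with ρ̂·(w − p(ρ̂)) = Q_0 and
ρ·(w − p(ρ)) < Q_0 for all ρ ∈ (ρ̂, ρ*]. -/
theorem statement_9
    (Rf' : ℝ) (hRf : 0 < Rf')
    (p : ℝ → ℝ) (hp : ContDiff ℝ 2 p)
    (H2 : ∀ ρ ∈ Set.Ici Rf',
      0 < deriv p ρ ∧ 0 < 2 * deriv p ρ + ρ * deriv (deriv p) ρ)
    (w Vc ρc ρstar Q₀ : ℝ) (hVc : 0 < Vc)
    (hρc : ρc ∈ Set.Ici Rf') (hρstar : ρstar ∈ Set.Ici Rf') (hle : ρc ≤ ρstar)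
    (hpc : p ρc = w - Vc) (hps : p ρstar = w)
    (hQpos : 0 < Q₀) (hQle : Q₀ ≤ ρc * Vc) :
    ∃! ρhat, ρhat ∈ Set.Icc ρc ρstar ∧ ρhat * (w - p ρhat) = Q₀ ∧
      ∀ ρ ∈ Set.Ioc ρhat ρstar, ρ * (w - p ρ) < Q₀ := by
  have hcp : Continuous p := hp.continuous
  set f : ℝ → ℝ := fun ρ => ρ * (w - p ρ) with hfdef
  have hcf : Continuous f := by
    exact continuous_id.mul (continuous_const.sub hcp)
  have hfc : f ρc = ρc * Vc := by simp [hfdef, hpc]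
  have hfs : f ρstar = 0 := by simp [hfdef, hps]
  set T : Set ℝ := Set.Icc ρc ρstar ∩ {ρ | f ρ = Q₀} with hTdef
  have hTclosed : IsClosed T :=
    isClosed_Icc.inter (isClosed_eq hcf continuous_const)
  have hTcomp : IsCompact T := isCompact_Icc.inter_right (isClosed_eq hcf continuous_const)
  have hTne : T.Nonempty := by
    have hmem : Q₀ ∈ Set.Icc (f ρstar) (f ρc) := by
      rw [hfc, hfs]; exact ⟨hQpos.le, hQle⟩
    obtain ⟨x, hx, hfx⟩ := intermediate_value_Icc' hle hcf.continuousOn hmem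
    exact ⟨x, hx, hfx⟩
  set ρhat := sSup T with hρhatdef
  have hρhatT : ρhat ∈ T := hTcomp.sSup_mem hTne
  obtain ⟨hρhatIcc, hρhateq⟩ := hρhatT
  have hkey : ∀ ρ ∈ Set.Ioc ρhat ρstar, f ρ < Q₀ := by
    intro ρ hρ
    by_contra h
    push_neg at h
    have hmem : Q₀ ∈ Set.Icc (f ρstar) (f ρ) := by
      rw [hfs]; exact ⟨hQpos.le, h⟩
    obtain ⟨σ, hσ, hfσ⟩ := intermediate_value_Icc' hρ.2 hcf.continuousOn hmem
    have hσT : σ ∈ T := ⟨⟨le_trans (le_trans hρhatIcc.1 hρ.1.le) hσ.1, hσ.2⟩, hfσ⟩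
    have : σ ≤ ρhat := le_csSup hTcomp.bddAbove hσT
    linarith [hρ.1, hσ.1]
  refine ⟨ρhat, ⟨hρhatIcc, hρhateq, hkey⟩, ?_⟩
  rintro ρ' ⟨hIcc', heq', hlt'⟩
  rcases lt_trichotomy ρ' ρhat with h | h | h
  · exact absurd hρhateq (ne_of_lt (hlt' ρhat ⟨h, hρhatIcc.2⟩))
  · exact h
  · exact absurd heq' (ne_of_lt (hkey ρ' ⟨h, hIcc'.2⟩))
end

section
/- The flow along the free-phase branch parametrized by the Riemann invariant, w ↦ Q(u_f(w)) = ρ_f(w)·V(ρ_f(w)), is strictly increasing on [W_c, W_max], and its maximum value is Q(u_f(W_max)) = q_max. -/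
/-- The flow along the free-phase branch parametrized by the Riemann invariant,
w ↦ Q(u_f(w)) = ρ_f(w)·V(ρ_f(w)), is strictly increasing on [W_c, W_max], and
its maximum value is Q(u_f(W_max)) = q_max. -/
theorem statement_16
    (Rf' Rf'' : ℝ) (hRf : 0 < Rf') (hRff : Rf' < Rf'')
    (V p : ℝ → ℝ) (hV : ContDiff ℝ 2 V) (hp : ContDiff ℝ 2 p)
    (hVnn : ∀ ρ ∈ Set.Icc (0:ℝ) Rf'', 0 ≤ V ρ) (hVpos : 0 < V Rf'')
    (H1 : ∀ ρ ∈ Set.Icc (0:ℝ) Rf'',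
      deriv V ρ ≤ 0 ∧ 0 < V ρ + ρ * deriv V ρ ∧
      2 * deriv V ρ + ρ * deriv (deriv V) ρ ≤ 0)
    (H2 : ∀ ρ ∈ Set.Ici Rf',
      0 < deriv p ρ ∧ 0 < 2 * deriv p ρ + ρ * deriv (deriv p) ρ)
    (H3 : ∀ ρ ∈ Set.Icc Rf' Rf'',
      0 < deriv V ρ + deriv p ρ ∧ V ρ < ρ * deriv p ρ)
    (ρf : ℝ → ℝ)
    (hρf : ∀ w ∈ Set.Icc (p Rf' + V Rf') (p Rf'' + V Rf''),
      ρf w ∈ Set.Icc Rf' Rf'' ∧ V (ρf w) + p (ρf w) = w) :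
    StrictMonoOn (fun w => ρf w * V (ρf w))
      (Set.Icc (p Rf' + V Rf') (p Rf'' + V Rf'')) ∧
    (∀ w ∈ Set.Icc (p Rf' + V Rf') (p Rf'' + V Rf''),
      ρf w * V (ρf w) ≤ ρf (p Rf'' + V Rf'') * V (ρf (p Rf'' + V Rf''))) ∧
    ρf (p Rf'' + V Rf'') * V (ρf (p Rf'' + V Rf'')) = Rf'' * V Rf'' := by
  have hVd : Differentiable ℝ V := hV.differentiable (by norm_num)
  have hpd : Differentiable ℝ p := hp.differentiable (by norm_num)
  -- f = V + p strictly monotone on [Rf', Rf'']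
  have hfmono : StrictMonoOn (fun ρ => V ρ + p ρ) (Set.Icc Rf' Rf'') := by
    apply strictMonoOn_of_deriv_pos (convex_Icc _ _)
    · exact (hVd.continuous.add hpd.continuous).continuousOn
    · intro x hx
      rw [interior_Icc] at hx
      have hx' : x ∈ Set.Icc Rf' Rf'' := ⟨hx.1.le, hx.2.le⟩
      have h3 := (H3 x hx').1
      rw [deriv_fun_add (hVd x) (hpd x)]
      linarith
  -- g = ρ * V ρ strictly monotone on [0, Rf'']
  have hgmono : StrictMonoOn (fun ρ => ρ * V ρ) (Set.Icc (0:ℝ) Rf'') := by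
    apply strictMonoOn_of_deriv_pos (convex_Icc _ _)
    · exact (continuous_id.mul hVd.continuous).continuousOn
    · intro x hx
      rw [interior_Icc] at hx
      have hx' : x ∈ Set.Icc (0:ℝ) Rf'' := ⟨hx.1.le, hx.2.le⟩
      have h1 := (H1 x hx').2.1
      have hd : HasDerivAt (fun y => y * V y) (1 * V x + x * deriv V x) x :=
        (hasDerivAt_id x).mul (hVd x).hasDerivAt
      rw [hd.deriv]
      linarith
  have hWcWm : p Rf' + V Rf' < p Rf'' + V Rf'' := by
    have := hfmono (Set.left_mem_Icc.2 hRff.le) (Set.right_mem_Icc.2 hRff.le) hRff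
    simp only at this; linarith
  have hsub : Set.Icc Rf' Rf'' ⊆ Set.Icc (0:ℝ) Rf'' :=
    Set.Icc_subset_Icc_left hRf.le
  have hmono : StrictMonoOn (fun w => ρf w * V (ρf w))
      (Set.Icc (p Rf' + V Rf') (p Rf'' + V Rf'')) := by
    intro w1 h1 w2 h2 hlt
    obtain ⟨hr1, he1⟩ := hρf w1 h1
    obtain ⟨hr2, he2⟩ := hρf w2 h2
    have hρlt : ρf w1 < ρf w2 := by
      by_contra h
      push_neg at h
      have := hfmono.monotoneOn hr2 hr1 h
      linarith
    exact hgmono (hsub hr1) (hsub hr2) hρlt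
  have hWmmem : p Rf'' + V Rf'' ∈ Set.Icc (p Rf' + V Rf') (p Rf'' + V Rf'') :=
    Set.right_mem_Icc.2 hWcWm.le
  obtain ⟨hrm, hem⟩ := hρf (p Rf'' + V Rf'') hWmmem
  have heq : ρf (p Rf'' + V Rf'') = Rf'' := by
    apply hfmono.injOn hrm (Set.right_mem_Icc.2 hRff.le)
    simp only
    linarith
  refine ⟨hmono, ?_, by rw [heq]⟩
  intro w hw
  exact hmono.monotoneOn hw hWmmem hw.2
end

section
/- Let v_max, R, v_ref, ρ_max > 0 and 0 < R_f' < R_f'', and define V(ρ) = v_max·(1 − ρ/R) and p(ρ) = v_ref·log(ρ/ρ_max). Then hypothesis (H3) — that is, V'(ρ) + p'(ρ) > 0 and V(ρ) < ρ·p'(ρ) for all ρ ∈ [R_f', R_f''] — holds if and only if v_ref·R > v_max·R_f'' and v_max·(1 − R_f'/R) < v_ref. -/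
lemma derivV (vmax R ρ : ℝ) :
    deriv (fun r => vmax * (1 - r / R)) ρ = -vmax / R := by
  have h : HasDerivAt (fun r : ℝ => vmax * (1 - r / R)) (vmax * -(1 / R)) ρ :=
    (((hasDerivAt_id ρ).div_const R).const_sub 1).const_mul vmax
  have := h.deriv
  rw [this]; ring

lemma derivP (vref ρmax ρ : ℝ) (hρ : ρ ≠ 0) (hρmax : ρmax ≠ 0) :
    deriv (fun r => vref * Real.log (r / ρmax)) ρ = vref / ρ := by
  have h1 : HasDerivAt (fun r : ℝ => r / ρmax) (1 / ρmax) ρ :=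
    (hasDerivAt_id ρ).div_const ρmax
  have h2 : HasDerivAt (fun r : ℝ => Real.log (r / ρmax)) ((1 / ρmax) / (ρ / ρmax)) ρ :=
    h1.log (div_ne_zero hρ hρmax)
  have h3 := (h2.const_mul vref).deriv
  rw [h3]
  field_simp

/-- For V(ρ) = v_max·(1 − ρ/R) and p(ρ) = v_ref·log(ρ/ρ_max), hypothesis (H3)
on [R_f', R_f''] holds if and only if v_ref·R > v_max·R_f'' and
v_max·(1 − R_f'/R) < v_ref. -/
theorem statement_19 (vmax R vref ρmax Rf' Rf'' : ℝ)
    (hvmax : 0 < vmax) (hR : 0 < R) (hvref : 0 < vref) (hρmax : 0 < ρmax)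
    (hRf : 0 < Rf') (hRff : Rf' < Rf'') :
    (∀ ρ ∈ Set.Icc Rf' Rf'',
      0 < deriv (fun r => vmax * (1 - r / R)) ρ +
            deriv (fun r => vref * Real.log (r / ρmax)) ρ ∧
      vmax * (1 - ρ / R) < ρ * deriv (fun r => vref * Real.log (r / ρmax)) ρ)
    ↔ (vref * R > vmax * Rf'' ∧ vmax * (1 - Rf' / R) < vref) := by
  constructor
  · intro h
    have h1 := h Rf'' ⟨le_of_lt hRff, le_refl _⟩
    have h2 := h Rf' ⟨le_refl _, le_of_lt hRff⟩
    have hRf'' : 0 < Rf'' := hRf.trans hRff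
    rw [derivV, derivP vref ρmax _ (ne_of_gt hRf'') (ne_of_gt hρmax)] at h1
    rw [derivV, derivP vref ρmax _ (ne_of_gt hRf) (ne_of_gt hρmax)] at h2
    constructor
    · have := h1.1
      rw [gt_iff_lt, ← sub_pos]
      have h0 : 0 < -vmax / R + vref / Rf'' := this
      have : 0 < (vref * R - vmax * Rf'') / (R * Rf'') := by
        have : -vmax / R + vref / Rf'' = (vref * R - vmax * Rf'') / (R * Rf'') := by
          field_simp; ring
        linarith [this ▸ h0]
      have hpos : 0 < R * Rf'' := mul_pos hR hRf''
      exact (div_pos_iff.mp this).resolve_right (fun ⟨_, hb⟩ => absurd hpos (not_lt.mpr hb.le)) |>.1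
    · have := h2.2
      rwa [mul_div_cancel₀ vref (ne_of_gt hRf)] at this
  · rintro ⟨hc1, hc2⟩ ρ ⟨hl, hu⟩
    have hρ : 0 < ρ := lt_of_lt_of_le hRf hl
    rw [derivV, derivP vref ρmax _ (ne_of_gt hρ) (ne_of_gt hρmax),
      mul_div_cancel₀ vref (ne_of_gt hρ)]
    constructor
    · have hρR : vmax * ρ < vref * R := lt_of_le_of_lt
        (by nlinarith) hc1
      have : vmax / R < vref / ρ := by
        rw [div_lt_div_iff₀ hR hρ]; nlinarith
      rw [neg_div]; linarith
    · have : vmax * (1 - ρ / R) ≤ vmax * (1 - Rf' / R) := by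
        apply mul_le_mul_of_nonneg_left _ hvmax.le
        have : Rf' / R ≤ ρ / R := by
          gcongr
        linarith
      linarith
end
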